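/- There exists a constant λ₀ > 0 such that for every v ∈ H¹(ℝ) satisfying ∫_ℝ v(s) U'(s) ds = 0, one has ⟨Lv, v⟩_{L²(ℝ)} = ∫_ℝ [-(v')² - (3U²-1) v²] ds ≤ -λ₀ ‖v‖²_{L²(ℝ)}. -/

import Mathlib

open MeasureTheory Filter Set Topology

noncomputable def U : ℝ → ℝ := fun x => Real.tanh (x / Real.sqrt 2)

noncomputable def PP : ℝ → ℝ := fun x => 1 - (U x) ^ 2

lemma s2_pos : (0:ℝ) < Real.sqrt 2 := by positivity

lemma s2_sq : Real.sqrt 2 ^ 2 = 2 := Real.sq_sqrt (by norm_num)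

lemma s2_mul : Real.sqrt 2 * Real.sqrt 2 = 2 := Real.mul_self_sqrt (by norm_num)

lemma one_le_s2 : (1:ℝ) ≤ Real.sqrt 2 := by
  nlinarith [s2_mul, s2_pos]

lemma hasDerivAt_tanh (y : ℝ) : HasDerivAt Real.tanh (1 - Real.tanh y ^ 2) y := by
  have hc : Real.cosh y ≠ 0 := (Real.cosh_pos y).ne'
  have h : HasDerivAt (fun x => Real.sinh x / Real.cosh x)
      ((Real.cosh y * Real.cosh y - Real.sinh y * Real.sinh y) / Real.cosh y ^ 2) y :=
    (Real.hasDerivAt_sinh y).div (Real.hasDerivAt_cosh y) hc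
  have he : (fun x => Real.sinh x / Real.cosh x) = Real.tanh := by
    funext x; rw [Real.tanh_eq_sinh_div_cosh]
  rw [he] at h
  convert h using 1
  rw [Real.tanh_eq_sinh_div_cosh, div_pow]
  field_simp

lemma continuous_U : Continuous U := by
  rw [continuous_iff_continuousAt]
  intro x
  exact ((hasDerivAt_tanh (x / Real.sqrt 2)).comp x
    ((hasDerivAt_id x).div_const (Real.sqrt 2))).continuousAt

lemma hasDerivAt_U (x : ℝ) : HasDerivAt U (PP x / Real.sqrt 2) x := by
  have h := (hasDerivAt_tanh (x / Real.sqrt 2)).comp x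
    ((hasDerivAt_id x).div_const (Real.sqrt 2))
  have : (1 - Real.tanh (x / Real.sqrt 2) ^ 2) * (1 / Real.sqrt 2) = PP x / Real.sqrt 2 := by
    simp only [PP, U]; ring
  rw [this] at h
  exact h

lemma deriv_U (x : ℝ) : deriv U x = PP x / Real.sqrt 2 := (hasDerivAt_U x).deriv

lemma PP_eq (x : ℝ) : PP x = 1 / Real.cosh (x / Real.sqrt 2) ^ 2 := by
  have hc : Real.cosh (x / Real.sqrt 2) ≠ 0 := (Real.cosh_pos _).ne'
  simp only [PP, U]
  rw [Real.tanh_eq_sinh_div_cosh, div_pow]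
  field_simp
  exact Real.cosh_sq_sub_sinh_sq _

lemma PP_pos (x : ℝ) : 0 < PP x := by
  rw [PP_eq]; positivity

lemma PP_le_one (x : ℝ) : PP x ≤ 1 := by
  simp only [PP]; nlinarith [sq_nonneg (U x)]

lemma U_sq_le_one (x : ℝ) : U x ^ 2 ≤ 1 := by
  have := PP_pos x
  simp only [PP] at this; linarith

lemma hasDerivAt_PP (x : ℝ) : HasDerivAt PP (-(Real.sqrt 2 * U x * PP x)) x := by
  have h := ((hasDerivAt_U x).pow 2)
  have h2 : HasDerivAt PP (0 - (2 : ℕ) * U x ^ (2 - 1) * (PP x / Real.sqrt 2)) x :=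
    (hasDerivAt_const x (1:ℝ)).sub h
  convert h2 using 1
  have h0 : PP x / Real.sqrt 2 * Real.sqrt 2 = PP x := by
    field_simp
  push_cast
  field_simp
  ring_nf
  linear_combination (-(U x * PP x)) * s2_sq

lemma cosh_le_exp_abs (y : ℝ) : Real.cosh y ≤ Real.exp |y| := by
  rw [Real.cosh_eq]
  have h1 : Real.exp y ≤ Real.exp |y| := Real.exp_le_exp.mpr (le_abs_self y)
  have h2 : Real.exp (-y) ≤ Real.exp |y| := Real.exp_le_exp.mpr (neg_le_abs y)
  linarith

lemma exp_abs_le_two_cosh (y : ℝ) : Real.exp |y| ≤ 2 * Real.cosh y := by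
  rw [Real.cosh_eq]
  rcases abs_cases y with ⟨h, _⟩ | ⟨h, _⟩ <;> rw [h] <;>
    nlinarith [Real.exp_pos y, Real.exp_pos (-y)]

lemma two_abs_div (x : ℝ) : 2 * |x / Real.sqrt 2| = Real.sqrt 2 * |x| := by
  rw [abs_div, abs_of_pos s2_pos]
  field_simp
  nlinarith [s2_mul, abs_nonneg x]

lemma PP_lower (x : ℝ) : Real.exp (-(Real.sqrt 2 * |x|)) ≤ PP x := by
  rw [PP_eq]
  set y := x / Real.sqrt 2
  have h1 : Real.cosh y ^ 2 ≤ Real.exp |y| ^ 2 := by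
    have := cosh_le_exp_abs y
    nlinarith [Real.cosh_pos y]
  have h2 : Real.exp |y| ^ 2 = Real.exp (Real.sqrt 2 * |x|) := by
    rw [← Real.exp_nat_mul]
    rw [← two_abs_div x]
    norm_num
    rfl
  rw [Real.exp_neg, ← h2]
  rw [inv_eq_one_div]
  apply div_le_div_of_nonneg_left (by norm_num) (by positivity) h1
  
lemma PP_upper (x : ℝ) : PP x ≤ 4 * Real.exp (-(Real.sqrt 2 * |x|)) := by
  rw [PP_eq]
  set y := x / Real.sqrt 2
  have h1 : Real.exp |y| ^ 2 ≤ (2 * Real.cosh y) ^ 2 := by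
    have := exp_abs_le_two_cosh y
    nlinarith [Real.exp_pos |y|]
  have h2 : Real.exp |y| ^ 2 = Real.exp (Real.sqrt 2 * |x|) := by
    rw [← Real.exp_nat_mul, ← two_abs_div x]
    norm_num
    rfl
  rw [Real.exp_neg, ← h2]
  rw [div_le_iff₀ (by positivity)]
  have h3 : (0:ℝ) < Real.exp |y| ^ 2 := by positivity
  have h5 := mul_le_mul_of_nonneg_left h1 (inv_nonneg.mpr h3.le)
  have h6 := inv_mul_cancel₀ (ne_of_gt h3)
  nlinarith [h5, h6]

lemma lim_eq_zero_atTop {g : ℝ → ℝ} {L : ℝ} (hgi : Integrable g)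
    (hnn : ∀ x, 0 ≤ g x) (hL : Tendsto g atTop (𝓝 L)) : L = 0 := by
  by_contra hne
  have hL0 : 0 ≤ L := ge_of_tendsto' hL hnn
  have hLpos : 0 < L := lt_of_le_of_ne hL0 (Ne.symm hne)
  have hev : ∀ᶠ x in atTop, L / 2 ≤ g x := hL.eventually (eventually_ge_nhds (by linarith))
  obtain ⟨A, hA⟩ := eventually_atTop.mp hev
  have hconst : Integrable (fun _ : ℝ => L / 2) (volume.restrict (Ioi A)) := by
    apply (hgi.restrict (s := Ioi A)).mono' aestronglyMeasurable_const
    filter_upwards [ae_restrict_mem measurableSet_Ioi] with x hx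
    rw [Real.norm_eq_abs, abs_of_nonneg (by linarith)]
    exact hA x (le_of_lt hx)
  rw [integrable_const_iff] at hconst
  rcases hconst with h | h
  · exact hne (by linarith)
  · have h := h.measure_univ_lt_top
    rw [Measure.restrict_apply_univ, Real.volume_Ioi] at h
    exact (lt_irrefl _ h).elim

lemma lim_eq_zero_atBot {g : ℝ → ℝ} {L : ℝ} (hgi : Integrable g)
    (hnn : ∀ x, 0 ≤ g x) (hL : Tendsto g atBot (𝓝 L)) : L = 0 := by
  by_contra hne
  have hL0 : 0 ≤ L := ge_of_tendsto' hL hnn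
  have hLpos : 0 < L := lt_of_le_of_ne hL0 (Ne.symm hne)
  have hev : ∀ᶠ x in atBot, L / 2 ≤ g x := hL.eventually (eventually_ge_nhds (by linarith))
  obtain ⟨A, hA⟩ := eventually_atBot.mp hev
  have hconst : Integrable (fun _ : ℝ => L / 2) (volume.restrict (Iio A)) := by
    apply (hgi.restrict (s := Iio A)).mono' aestronglyMeasurable_const
    filter_upwards [ae_restrict_mem measurableSet_Iio] with x hx
    rw [Real.norm_eq_abs, abs_of_nonneg (by linarith)]
    exact hA x (le_of_lt hx)
  rw [integrable_const_iff] at hconst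
  rcases hconst with h | h
  · exact hne (by linarith)
  · have h := h.measure_univ_lt_top
    rw [Measure.restrict_apply_univ, Real.volume_Iio] at h
    exact (lt_irrefl _ h).elim

lemma vsq_tendsto (v : ℝ → ℝ) (hv : ContDiff ℝ 1 v)
    (h2 : Integrable (fun x => v x ^ 2)) (h2' : Integrable (fun x => deriv v x ^ 2)) :
    Tendsto (fun x => v x ^ 2) atTop (𝓝 0) ∧ Tendsto (fun x => v x ^ 2) atBot (𝓝 0) := by
  have hdv : ∀ x, HasDerivAt v (deriv v x) x := fun x =>
    (hv.differentiable one_ne_zero x).hasDerivAt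
  set g : ℝ → ℝ := fun x => v x ^ 2 with hgdef
  set g' : ℝ → ℝ := fun x => 2 * v x * deriv v x with hg'def
  have hg : ∀ x, HasDerivAt g (g' x) x := by
    intro x
    have := (hdv x).fun_pow 2
    simpa [hg'def, mul_comm, mul_assoc] using this
  have hcg' : Continuous g' :=
    (continuous_const.mul hv.continuous).mul (hv.continuous_deriv le_rfl)
  have hg'i : Integrable g' := by
    apply (h2.add h2').mono' hcg'.aestronglyMeasurable
    filter_upwards with x
    rw [Real.norm_eq_abs, hg'def]
    rw [abs_le]
    simp only [Pi.add_apply, hgdef]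
    constructor <;> nlinarith [sq_nonneg (v x - deriv v x), sq_nonneg (v x + deriv v x)]
  have hnn : ∀ x, 0 ≤ g x := fun x => sq_nonneg _
  constructor
  · have ht : Tendsto (fun R => ∫ x in (0:ℝ)..R, g' x) atTop (𝓝 (∫ x in Ioi (0:ℝ), g' x)) :=
      intervalIntegral_tendsto_integral_Ioi 0 hg'i.integrableOn tendsto_id
    have heq : ∀ R : ℝ, ∫ x in (0:ℝ)..R, g' x = g R - g 0 := fun R =>
      intervalIntegral.integral_eq_sub_of_hasDerivAt (fun x _ => hg x)
        (hcg'.intervalIntegrable _ _)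
    have ht2 : Tendsto g atTop (𝓝 ((∫ x in Ioi (0:ℝ), g' x) + g 0)) := by
      have := ht.add_const (g 0)
      apply this.congr
      intro R; rw [heq R]; ring
    have hz : (∫ x in Ioi (0:ℝ), g' x) + g 0 = 0 := lim_eq_zero_atTop h2 hnn ht2
    rwa [hz] at ht2
  · have ht : Tendsto (fun R => ∫ x in R..(0:ℝ), g' x) atBot (𝓝 (∫ x in Iic (0:ℝ), g' x)) :=
      intervalIntegral_tendsto_integral_Iic 0 hg'i.integrableOn tendsto_id
    have heq : ∀ R : ℝ, ∫ x in R..(0:ℝ), g' x = g 0 - g R := fun R =>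
      intervalIntegral.integral_eq_sub_of_hasDerivAt (fun x _ => hg x)
        (hcg'.intervalIntegrable _ _)
    have ht2 : Tendsto g atBot (𝓝 (g 0 - ∫ x in Iic (0:ℝ), g' x)) := by
      have := (ht.const_sub (g 0))
      apply this.congr
      intro R; rw [heq R]; ring
    have hz : g 0 - (∫ x in Iic (0:ℝ), g' x) = 0 := lim_eq_zero_atBot h2 hnn ht2
    rwa [hz] at ht2

lemma continuous_PP : Continuous PP := continuous_const.sub (continuous_U.pow 2)

lemma U_abs_le_one (x : ℝ) : |U x| ≤ 1 := by
  rw [abs_le]; constructor <;> nlinarith [U_sq_le_one x]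

lemma hh_sq_integrable (v : ℝ → ℝ) (hv : ContDiff ℝ 1 v)
    (h2 : Integrable (fun x => v x ^ 2)) (h2' : Integrable (fun x => deriv v x ^ 2)) :
    Integrable (fun x => (deriv v x + Real.sqrt 2 * U x * v x) ^ 2) := by
  have hc : Continuous (fun x => (deriv v x + Real.sqrt 2 * U x * v x) ^ 2) :=
    ((hv.continuous_deriv le_rfl).add ((continuous_const.mul continuous_U).mul
      hv.continuous)).pow 2
  apply ((h2'.const_mul 2).add (h2.const_mul 4)).mono' hc.aestronglyMeasurable
  filter_upwards with x
  rw [Real.norm_eq_abs, abs_of_nonneg (sq_nonneg _)]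
  simp only [Pi.add_apply]
  have hU := U_sq_le_one x
  have h1 : U x ^ 2 * v x ^ 2 ≤ v x ^ 2 := by nlinarith [sq_nonneg (v x)]
  have e1 : Real.sqrt 2 ^ 2 * (U x ^ 2 * v x ^ 2) = 2 * (U x ^ 2 * v x ^ 2) := by
    rw [s2_sq]
  nlinarith [sq_nonneg (deriv v x - Real.sqrt 2 * U x * v x), e1, h1]

lemma quad_eq (v : ℝ → ℝ) (hv : ContDiff ℝ 1 v)
    (h2 : Integrable (fun x => v x ^ 2)) (h2' : Integrable (fun x => deriv v x ^ 2)) :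
    (∫ x : ℝ, (-(deriv v x) ^ 2 - (3 * (U x) ^ 2 - 1) * (v x) ^ 2)) =
      -∫ x : ℝ, (deriv v x + Real.sqrt 2 * U x * v x) ^ 2 := by
  have hdv : ∀ x, HasDerivAt v (deriv v x) x := fun x =>
    (hv.differentiable one_ne_zero x).hasDerivAt
  have hcd : Continuous (deriv v) := hv.continuous_deriv le_rfl
  set F : ℝ → ℝ := fun x => U x * v x ^ 2 with hFdef
  set F' : ℝ → ℝ := fun x => PP x / Real.sqrt 2 * v x ^ 2 + U x * (2 * v x * deriv v x)
    with hF'def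
  have hF : ∀ x, HasDerivAt F (F' x) x := by
    intro x
    have := (hasDerivAt_U x).fun_mul ((hdv x).fun_pow 2)
    simpa [hF'def, mul_comm, mul_assoc] using this
  have hcF' : Continuous F' :=
    ((continuous_PP.div_const _).mul (hv.continuous.pow 2)).add
      (continuous_U.mul ((continuous_const.mul hv.continuous).mul hcd))
  have hF'i : Integrable F' := by
    apply ((h2.const_mul 2).add h2').mono' hcF'.aestronglyMeasurable
    filter_upwards with x
    rw [Real.norm_eq_abs, hF'def]
    have hU1 := U_abs_le_one x
    have h1 : |PP x / Real.sqrt 2 * v x ^ 2| ≤ v x ^ 2 := by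
      rw [abs_mul, abs_of_nonneg (le_of_lt (div_pos (PP_pos x) s2_pos)),
        abs_of_nonneg (sq_nonneg _)]
      have hq : PP x / Real.sqrt 2 ≤ 1 := by
        rw [div_le_one s2_pos]; linarith [PP_le_one x, one_le_s2]
      nlinarith [sq_nonneg (v x)]
    have h2x : |U x * (2 * v x * deriv v x)| ≤ v x ^ 2 + deriv v x ^ 2 := by
      rw [abs_mul]
      have hb : |2 * v x * deriv v x| ≤ v x ^ 2 + deriv v x ^ 2 := by
        rw [abs_le]
        constructor <;> nlinarith [sq_nonneg (v x - deriv v x), sq_nonneg (v x + deriv v x)]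
      calc |U x| * |2 * v x * deriv v x| ≤ 1 * (v x ^ 2 + deriv v x ^ 2) :=
            mul_le_mul hU1 hb (abs_nonneg _) zero_le_one
        _ = v x ^ 2 + deriv v x ^ 2 := one_mul _
    calc |PP x / Real.sqrt 2 * v x ^ 2 + U x * (2 * v x * deriv v x)|
        ≤ |PP x / Real.sqrt 2 * v x ^ 2| + |U x * (2 * v x * deriv v x)| := abs_add_le _ _
      _ ≤ v x ^ 2 + (v x ^ 2 + deriv v x ^ 2) := add_le_add h1 h2x
      _ = 2 * v x ^ 2 + deriv v x ^ 2 := by ring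
  obtain ⟨htop, hbot⟩ := vsq_tendsto v hv h2 h2'
  have hFtop : Tendsto F atTop (𝓝 0) := by
    apply squeeze_zero_norm _ htop
    intro x
    rw [Real.norm_eq_abs, hFdef]
    calc |U x * v x ^ 2| = |U x| * |v x ^ 2| := abs_mul _ _
      _ ≤ 1 * |v x ^ 2| := by
          apply mul_le_mul_of_nonneg_right (U_abs_le_one x) (abs_nonneg _)
      _ = v x ^ 2 := by rw [one_mul, abs_of_nonneg (sq_nonneg _)]
  have hFbot : Tendsto F atBot (𝓝 0) := by
    apply squeeze_zero_norm _ hbot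
    intro x
    rw [Real.norm_eq_abs, hFdef]
    calc |U x * v x ^ 2| = |U x| * |v x ^ 2| := abs_mul _ _
      _ ≤ 1 * |v x ^ 2| := by
          apply mul_le_mul_of_nonneg_right (U_abs_le_one x) (abs_nonneg _)
      _ = v x ^ 2 := by rw [one_mul, abs_of_nonneg (sq_nonneg _)]
  have hIoi : ∫ x in Ioi (0:ℝ), F' x = 0 - F 0 :=
    integral_Ioi_of_hasDerivAt_of_tendsto' (fun x _ => hF x) hF'i.integrableOn hFtop
  have hIic : ∫ x in Iic (0:ℝ), F' x = F 0 - 0 :=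
    integral_Iic_of_hasDerivAt_of_tendsto' (fun x _ => hF x) hF'i.integrableOn hFbot
  have hint : ∫ x : ℝ, F' x = 0 := by
    rw [← intervalIntegral.integral_Iic_add_Ioi (b := (0:ℝ)) hF'i.integrableOn hF'i.integrableOn,
      hIoi, hIic]
    ring
  have hh2i := hh_sq_integrable v hv h2 h2'
  have hpt : (fun x => -(deriv v x) ^ 2 - (3 * (U x) ^ 2 - 1) * (v x) ^ 2) =
      fun x => Real.sqrt 2 * F' x - (deriv v x + Real.sqrt 2 * U x * v x) ^ 2 := by
    funext x
    rw [hF'def]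
    simp only [PP]
    have hs0 : Real.sqrt 2 ≠ 0 := ne_of_gt s2_pos
    field_simp
    linear_combination (U x ^ 2 * v x ^ 2) * s2_sq
  rw [hpt, integral_sub (hF'i.const_mul _) hh2i, integral_const_mul, hint]
  ring

noncomputable def mw : ℝ → ℝ := fun x => Real.exp (-(2 * Real.sqrt 2 * |x|))

lemma mw_pos (x : ℝ) : 0 < mw x := Real.exp_pos _

lemma continuous_mw : Continuous mw :=
  Real.continuous_exp.comp (continuous_const.mul continuous_abs).neg

lemma mw_le_PP_sq (x : ℝ) : mw x ≤ PP x ^ 2 := by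
  have h := PP_lower x
  have h2 : Real.exp (-(Real.sqrt 2 * |x|)) ^ 2 = mw x := by
    rw [← Real.exp_nat_mul]
    unfold mw
    congr 1
    push_cast
    ring
  calc mw x = Real.exp (-(Real.sqrt 2 * |x|)) ^ 2 := h2.symm
    _ ≤ PP x ^ 2 := by nlinarith [Real.exp_pos (-(Real.sqrt 2 * |x|))]

lemma PP_sq_le_mw (x : ℝ) : PP x ^ 2 ≤ 16 * mw x := by
  have h := PP_upper x
  have h2 : Real.exp (-(Real.sqrt 2 * |x|)) ^ 2 = mw x := by
    rw [← Real.exp_nat_mul]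
    unfold mw
    congr 1
    push_cast
    ring
  have h3 : PP x ^ 2 ≤ (4 * Real.exp (-(Real.sqrt 2 * |x|))) ^ 2 := by
    nlinarith [PP_pos x]
  calc PP x ^ 2 ≤ (4 * Real.exp (-(Real.sqrt 2 * |x|))) ^ 2 := h3
    _ = 16 * Real.exp (-(Real.sqrt 2 * |x|)) ^ 2 := by ring
    _ = 16 * mw x := by rw [h2]

lemma mw_integrable : Integrable mw := by
  have hb : (0:ℝ) < 2 * Real.sqrt 2 := by positivity
  have hIoi : IntegrableOn (fun x : ℝ => Real.exp (-(2 * Real.sqrt 2) * x)) (Ioi 0) :=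
    exp_neg_integrableOn_Ioi 0 hb
  have hIoi' : IntegrableOn mw (Ioi 0) := by
    refine IntegrableOn.congr_fun hIoi (fun x hx => ?_) measurableSet_Ioi
    unfold mw
    rw [abs_of_pos hx]
    ring_nf
  rw [← integrableOn_univ, ← @Iio_union_Ici _ _ (0 : ℝ), integrableOn_union,
    integrableOn_Ici_iff_integrableOn_Ioi]
  refine ⟨?_, hIoi'⟩
  rw [← (Measure.measurePreserving_neg (volume : Measure ℝ)).integrableOn_comp_preimage
      (Homeomorph.neg ℝ).measurableEmbedding]
  simp only [Function.comp_def, mw, abs_neg, neg_preimage, neg_Iio, neg_neg, neg_zero]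
  refine IntegrableOn.congr_fun hIoi (fun x hx => ?_) measurableSet_Ioi
  rw [abs_of_pos hx]
  ring_nf

lemma poincare (v : ℝ → ℝ) (hv : ContDiff ℝ 1 v)
    (h2 : Integrable (fun x => v x ^ 2)) (h2' : Integrable (fun x => deriv v x ^ 2))
    (horth : (∫ x : ℝ, v x * PP x) = 0) :
    ∫ x : ℝ, v x ^ 2 ≤ 8 * ∫ x : ℝ, (deriv v x + Real.sqrt 2 * U x * v x) ^ 2 := by
  have hdv : ∀ x, HasDerivAt v (deriv v x) x := fun x =>
    (hv.differentiable one_ne_zero x).hasDerivAt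
  have hcv := hv.continuous
  have hcd : Continuous (deriv v) := hv.continuous_deriv le_rfl
  have hPne : ∀ x, PP x ≠ 0 := fun x => ne_of_gt (PP_pos x)
  set hh : ℝ → ℝ := fun x => deriv v x + Real.sqrt 2 * U x * v x with hhdef
  have hch : Continuous hh :=
    hcd.add ((continuous_const.mul continuous_U).mul hcv)
  have hh2i : Integrable (fun x => hh x ^ 2) := hh_sq_integrable v hv h2 h2'
  set c₀ : ℝ := v 0 / PP 0 with hc₀
  set u : ℝ → ℝ := fun x => v x / PP x - c₀ with hudef
  set u' : ℝ → ℝ := fun x => hh x / PP x with hu'def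
  have hu0 : u 0 = 0 := sub_self _
  have hcu : Continuous u := (hcv.div continuous_PP hPne).sub continuous_const
  have hcu' : Continuous u' := hch.div continuous_PP hPne
  have hu : ∀ x, HasDerivAt u (u' x) x := by
    intro x
    have h := ((hdv x).fun_div (hasDerivAt_PP x) (hPne x)).sub_const c₀
    refine h.congr_deriv (Eq.symm ?_)
    rw [hu'def, hhdef]
    dsimp only
    rw [div_eq_div_iff (hPne x) (pow_ne_zero 2 (hPne x))]
    ring
  -- integrability facts
  have hPP2i : Integrable (fun x => PP x ^ 2) := by
    apply (mw_integrable.const_mul 16).mono' ((continuous_PP.pow 2).aestronglyMeasurable)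
    filter_upwards with x
    rw [Real.norm_eq_abs, abs_of_nonneg (sq_nonneg _)]
    exact PP_sq_le_mw x
  have hvPi : Integrable (fun x => v x * PP x) := by
    apply (h2.add hPP2i).mono' ((hcv.fun_mul continuous_PP).aestronglyMeasurable)
    filter_upwards with x
    rw [Real.norm_eq_abs, abs_le]
    simp only [Pi.add_apply]
    constructor <;> nlinarith [sq_nonneg (v x - PP x), sq_nonneg (v x + PP x)]
  have hPu : ∀ x, PP x * u x = v x - c₀ * PP x := by
    intro x
    rw [hudef, hc₀]
    field_simp [hPne x, hPne 0]
  have huPP2 : Integrable (fun x => PP x ^ 2 * u x ^ 2) := by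
    have heq : (fun x => PP x ^ 2 * u x ^ 2) =
        fun x => v x ^ 2 - 2 * c₀ * (v x * PP x) + c₀ ^ 2 * PP x ^ 2 := by
      funext x
      have hx := hPu x
      linear_combination (PP x * u x + v x - c₀ * PP x) * hx
    rw [heq]
    exact (h2.sub (hvPi.const_mul (2 * c₀))).add (hPP2i.const_mul (c₀ ^ 2))
  have hum : Integrable (fun x => mw x * u x ^ 2) := by
    apply huPP2.mono' ((continuous_mw.fun_mul (hcu.fun_pow 2)).aestronglyMeasurable)
    filter_upwards with x
    rw [Real.norm_eq_abs, abs_of_nonneg (mul_nonneg (mw_pos x).le (sq_nonneg _))]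
    exact mul_le_mul_of_nonneg_right (mw_le_PP_sq x) (sq_nonneg _)
  have hPPu'sq : ∀ x, PP x ^ 2 * u' x ^ 2 = hh x ^ 2 := by
    intro x
    rw [hu'def]
    field_simp [hPne x]
  have hmwu' : ∀ x, mw x * u' x ^ 2 ≤ hh x ^ 2 := by
    intro x
    rw [← hPPu'sq x]
    exact mul_le_mul_of_nonneg_right (mw_le_PP_sq x) (sq_nonneg _)
  have hu'm : Integrable (fun x => mw x * u' x ^ 2) := by
    apply hh2i.mono' ((continuous_mw.fun_mul (hcu'.fun_pow 2)).aestronglyMeasurable)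
    filter_upwards with x
    rw [Real.norm_eq_abs, abs_of_nonneg (mul_nonneg (mw_pos x).le (sq_nonneg _))]
    exact hmwu' x
  -- right half line
  set ex : ℝ → ℝ := fun x => Real.exp (-(2 * Real.sqrt 2) * x) with hexdef
  have hcex : Continuous ex := Real.continuous_exp.comp (continuous_const.mul continuous_id)
  have hex : ∀ x, HasDerivAt ex (-(2 * Real.sqrt 2) * ex x) x := by
    intro x
    have h := ((hasDerivAt_id x).const_mul (-(2 * Real.sqrt 2))).exp
    simpa [hexdef, mul_comm, mul_one] using h
  set G : ℝ → ℝ := fun x => u x ^ 2 * ex x with hGdef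
  set G' : ℝ → ℝ := fun x => 2 * u x * u' x * ex x + u x ^ 2 * (-(2 * Real.sqrt 2) * ex x)
    with hG'def
  have hG : ∀ x, HasDerivAt G (G' x) x := by
    intro x
    have h := ((hu x).fun_pow 2).fun_mul (hex x)
    simpa [hGdef, hG'def, pow_one, mul_comm, mul_assoc, mul_left_comm] using h
  have hcG' : Continuous G' :=
    (((continuous_const.mul hcu).mul hcu').mul hcex).add
      ((hcu.pow 2).mul (continuous_const.mul hcex))
  have hkey : ∀ x, 2 * (u x ^ 2 * ex x) ≤ u' x ^ 2 * ex x - Real.sqrt 2 * G' x := by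
    intro x
    have hexp0 : (0:ℝ) ≤ ex x := (Real.exp_pos _).le
    have hsq := mul_nonneg (sq_nonneg (u' x - Real.sqrt 2 * u x)) hexp0
    have e1 : Real.sqrt 2 ^ 2 * (u x ^ 2 * ex x) = 2 * (u x ^ 2 * ex x) := by rw [s2_sq]
    rw [hG'def]
    dsimp only
    nlinarith [hsq, e1]
  have hBint : IntegrableOn (fun x => u' x ^ 2 * ex x) (Ioi 0) := by
    refine IntegrableOn.congr_fun hu'm.integrableOn (fun x hx => ?_) measurableSet_Ioi
    simp only [mw, hexdef]
    rw [abs_of_pos hx]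
    ring_nf
  have hAint : IntegrableOn (fun x => u x ^ 2 * ex x) (Ioi 0) := by
    refine IntegrableOn.congr_fun hum.integrableOn (fun x hx => ?_) measurableSet_Ioi
    simp only [mw, hexdef]
    rw [abs_of_pos hx]
    ring_nf
  have hstep : ∀ R : ℝ, 0 ≤ R → (∫ x in (0:ℝ)..R, 2 * (u x ^ 2 * ex x)) ≤
      ∫ x in Ioi (0:ℝ), u' x ^ 2 * ex x := by
    intro R hR
    have hmono : (∫ x in (0:ℝ)..R, 2 * (u x ^ 2 * ex x)) ≤
        ∫ x in (0:ℝ)..R, (u' x ^ 2 * ex x - Real.sqrt 2 * G' x) :=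
      intervalIntegral.integral_mono_on hR
        ((continuous_const.mul ((hcu.pow 2).mul hcex)).intervalIntegrable _ _)
        (((hcu'.pow 2).mul hcex).sub (continuous_const.mul hcG')|>.intervalIntegrable _ _)
        (fun x _ => hkey x)
    have hftc : ∫ x in (0:ℝ)..R, Real.sqrt 2 * G' x = Real.sqrt 2 * (G R - G 0) := by
      rw [intervalIntegral.integral_const_mul,
        intervalIntegral.integral_eq_sub_of_hasDerivAt (fun x _ => hG x)
          (hcG'.intervalIntegrable _ _)]
    have hsub : ∫ x in (0:ℝ)..R, (u' x ^ 2 * ex x - Real.sqrt 2 * G' x) =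
        (∫ x in (0:ℝ)..R, u' x ^ 2 * ex x) - Real.sqrt 2 * (G R - G 0) := by
      rw [intervalIntegral.integral_sub (((hcu'.fun_pow 2).fun_mul hcex).intervalIntegrable _ _)
        ((continuous_const.fun_mul hcG').intervalIntegrable _ _), hftc]
    have hG0 : G 0 = 0 := by rw [hGdef]; simp [hu0]
    have hGR : 0 ≤ G R := mul_nonneg (sq_nonneg _) (Real.exp_pos _).le
    have hIR : (∫ x in (0:ℝ)..R, u' x ^ 2 * ex x) ≤ ∫ x in Ioi (0:ℝ), u' x ^ 2 * ex x := by
      rw [intervalIntegral.integral_of_le hR]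
      refine setIntegral_mono_set hBint ?_ ?_
      · filter_upwards with x
        exact mul_nonneg (sq_nonneg _) (Real.exp_pos _).le
      · exact HasSubset.Subset.eventuallyLE Ioc_subset_Ioi_self
    have hs2GR : 0 ≤ Real.sqrt 2 * G R := mul_nonneg s2_pos.le hGR
    calc (∫ x in (0:ℝ)..R, 2 * (u x ^ 2 * ex x))
        ≤ ∫ x in (0:ℝ)..R, (u' x ^ 2 * ex x - Real.sqrt 2 * G' x) := hmono
      _ = (∫ x in (0:ℝ)..R, u' x ^ 2 * ex x) - Real.sqrt 2 * (G R - G 0) := hsub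
      _ ≤ ∫ x in Ioi (0:ℝ), u' x ^ 2 * ex x := by rw [hG0]; linarith
  have hRight : 2 * (∫ x in Ioi (0:ℝ), u x ^ 2 * ex x) ≤
      ∫ x in Ioi (0:ℝ), u' x ^ 2 * ex x := by
    have ht : Tendsto (fun R => ∫ x in (0:ℝ)..R, 2 * (u x ^ 2 * ex x)) atTop
        (𝓝 (∫ x in Ioi (0:ℝ), 2 * (u x ^ 2 * ex x))) :=
      intervalIntegral_tendsto_integral_Ioi 0 (hAint.const_mul 2) tendsto_id
    have hle := le_of_tendsto ht (eventually_atTop.mpr ⟨0, fun R hR => hstep R hR⟩)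
    rwa [integral_const_mul] at hle
  -- left half line
  set exm : ℝ → ℝ := fun x => Real.exp ((2 * Real.sqrt 2) * x) with hexmdef
  have hcexm : Continuous exm := Real.continuous_exp.comp (continuous_const.mul continuous_id)
  have hexm : ∀ x, HasDerivAt exm ((2 * Real.sqrt 2) * exm x) x := by
    intro x
    have h := ((hasDerivAt_id x).const_mul ((2 * Real.sqrt 2))).exp
    simpa [hexmdef, mul_comm, mul_one] using h
  set K : ℝ → ℝ := fun x => u x ^ 2 * exm x with hKdef
  set K' : ℝ → ℝ := fun x => 2 * u x * u' x * exm x + u x ^ 2 * ((2 * Real.sqrt 2) * exm x)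
    with hK'def
  have hK : ∀ x, HasDerivAt K (K' x) x := by
    intro x
    have h := ((hu x).fun_pow 2).fun_mul (hexm x)
    simpa [hKdef, hK'def, pow_one, mul_comm, mul_assoc, mul_left_comm] using h
  have hcK' : Continuous K' :=
    (((continuous_const.mul hcu).mul hcu').mul hcexm).add
      ((hcu.pow 2).mul (continuous_const.mul hcexm))
  have hkeyL : ∀ x, 2 * (u x ^ 2 * exm x) ≤ u' x ^ 2 * exm x + Real.sqrt 2 * K' x := by
    intro x
    have hexp0 : (0:ℝ) ≤ exm x := (Real.exp_pos _).le
    have hsq := mul_nonneg (sq_nonneg (u' x + Real.sqrt 2 * u x)) hexp0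
    have e1 : Real.sqrt 2 ^ 2 * (u x ^ 2 * exm x) = 2 * (u x ^ 2 * exm x) := by rw [s2_sq]
    rw [hK'def]
    dsimp only
    nlinarith [hsq, e1]
  have hBintL : IntegrableOn (fun x => u' x ^ 2 * exm x) (Iic 0) := by
    refine IntegrableOn.congr_fun hu'm.integrableOn (fun x hx => ?_) measurableSet_Iic
    simp only [mw, hexmdef]
    rw [abs_of_nonpos hx]
    ring_nf
  have hAintL : IntegrableOn (fun x => u x ^ 2 * exm x) (Iic 0) := by
    refine IntegrableOn.congr_fun hum.integrableOn (fun x hx => ?_) measurableSet_Iic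
    simp only [mw, hexmdef]
    rw [abs_of_nonpos hx]
    ring_nf
  have hstepL : ∀ a : ℝ, a ≤ 0 → (∫ x in a..(0:ℝ), 2 * (u x ^ 2 * exm x)) ≤
      ∫ x in Iic (0:ℝ), u' x ^ 2 * exm x := by
    intro a ha
    have hmono : (∫ x in a..(0:ℝ), 2 * (u x ^ 2 * exm x)) ≤
        ∫ x in a..(0:ℝ), (u' x ^ 2 * exm x + Real.sqrt 2 * K' x) :=
      intervalIntegral.integral_mono_on ha
        ((continuous_const.mul ((hcu.pow 2).mul hcexm)).intervalIntegrable _ _)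
        (((hcu'.pow 2).mul hcexm).add (continuous_const.mul hcK')|>.intervalIntegrable _ _)
        (fun x _ => hkeyL x)
    have hftc : ∫ x in a..(0:ℝ), Real.sqrt 2 * K' x = Real.sqrt 2 * (K 0 - K a) := by
      rw [intervalIntegral.integral_const_mul,
        intervalIntegral.integral_eq_sub_of_hasDerivAt (fun x _ => hK x)
          (hcK'.intervalIntegrable _ _)]
    have hsub : ∫ x in a..(0:ℝ), (u' x ^ 2 * exm x + Real.sqrt 2 * K' x) =
        (∫ x in a..(0:ℝ), u' x ^ 2 * exm x) + Real.sqrt 2 * (K 0 - K a) := by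
      rw [intervalIntegral.integral_add (((hcu'.fun_pow 2).fun_mul hcexm).intervalIntegrable _ _)
        ((continuous_const.fun_mul hcK').intervalIntegrable _ _), hftc]
    have hK0 : K 0 = 0 := by rw [hKdef]; simp [hu0]
    have hKa : 0 ≤ K a := mul_nonneg (sq_nonneg _) (Real.exp_pos _).le
    have hIL : (∫ x in a..(0:ℝ), u' x ^ 2 * exm x) ≤ ∫ x in Iic (0:ℝ), u' x ^ 2 * exm x := by
      rw [intervalIntegral.integral_of_le ha]
      refine setIntegral_mono_set hBintL ?_ ?_
      · filter_upwards with x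
        exact mul_nonneg (sq_nonneg _) (Real.exp_pos _).le
      · exact HasSubset.Subset.eventuallyLE Ioc_subset_Iic_self
    have hs2Ka : 0 ≤ Real.sqrt 2 * K a := mul_nonneg s2_pos.le hKa
    calc (∫ x in a..(0:ℝ), 2 * (u x ^ 2 * exm x))
        ≤ ∫ x in a..(0:ℝ), (u' x ^ 2 * exm x + Real.sqrt 2 * K' x) := hmono
      _ = (∫ x in a..(0:ℝ), u' x ^ 2 * exm x) + Real.sqrt 2 * (K 0 - K a) := hsub
      _ ≤ ∫ x in Iic (0:ℝ), u' x ^ 2 * exm x := by rw [hK0]; linarith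
  have hLeft : 2 * (∫ x in Iic (0:ℝ), u x ^ 2 * exm x) ≤
      ∫ x in Iic (0:ℝ), u' x ^ 2 * exm x := by
    have ht : Tendsto (fun a => ∫ x in a..(0:ℝ), 2 * (u x ^ 2 * exm x)) atBot
        (𝓝 (∫ x in Iic (0:ℝ), 2 * (u x ^ 2 * exm x))) :=
      intervalIntegral_tendsto_integral_Iic 0 (hAintL.const_mul 2) tendsto_id
    have hle := le_of_tendsto ht (eventually_atBot.mpr ⟨0, fun a ha => hstepL a ha⟩)
    rwa [integral_const_mul] at hle
  -- convert half-line integrals back to mw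
  have hAeqR : ∫ x in Ioi (0:ℝ), mw x * u x ^ 2 = ∫ x in Ioi (0:ℝ), u x ^ 2 * ex x := by
    refine setIntegral_congr_fun measurableSet_Ioi (fun x hx => ?_)
    simp only [mw, hexdef]
    rw [abs_of_pos hx]
    ring_nf
  have hBeqR : ∫ x in Ioi (0:ℝ), mw x * u' x ^ 2 = ∫ x in Ioi (0:ℝ), u' x ^ 2 * ex x := by
    refine setIntegral_congr_fun measurableSet_Ioi (fun x hx => ?_)
    simp only [mw, hexdef]
    rw [abs_of_pos hx]
    ring_nf
  have hAeqL : ∫ x in Iic (0:ℝ), mw x * u x ^ 2 = ∫ x in Iic (0:ℝ), u x ^ 2 * exm x := by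
    refine setIntegral_congr_fun measurableSet_Iic (fun x hx => ?_)
    simp only [mw, hexmdef]
    rw [abs_of_nonpos hx]
    ring_nf
  have hBeqL : ∫ x in Iic (0:ℝ), mw x * u' x ^ 2 = ∫ x in Iic (0:ℝ), u' x ^ 2 * exm x := by
    refine setIntegral_congr_fun measurableSet_Iic (fun x hx => ?_)
    simp only [mw, hexmdef]
    rw [abs_of_nonpos hx]
    ring_nf
  have hsplitA : (∫ x in Iic (0:ℝ), mw x * u x ^ 2) + (∫ x in Ioi (0:ℝ), mw x * u x ^ 2) =
      ∫ x : ℝ, mw x * u x ^ 2 :=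
    intervalIntegral.integral_Iic_add_Ioi hum.integrableOn hum.integrableOn
  have hsplitB : (∫ x in Iic (0:ℝ), mw x * u' x ^ 2) + (∫ x in Ioi (0:ℝ), mw x * u' x ^ 2) =
      ∫ x : ℝ, mw x * u' x ^ 2 :=
    intervalIntegral.integral_Iic_add_Ioi hu'm.integrableOn hu'm.integrableOn
  have hPoincare : 2 * (∫ x : ℝ, mw x * u x ^ 2) ≤ ∫ x : ℝ, mw x * u' x ^ 2 := by
    rw [← hsplitA, ← hsplitB, hAeqR, hAeqL, hBeqR, hBeqL]
    linarith
  -- orthogonality expansion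
  have heq2 : (fun x => PP x ^ 2 * u x ^ 2) =
      fun x => v x ^ 2 - 2 * c₀ * (v x * PP x) + c₀ ^ 2 * PP x ^ 2 := by
    funext x
    have hx := hPu x
    linear_combination (PP x * u x + v x - c₀ * PP x) * hx
  have hO1 : ∫ x : ℝ, PP x ^ 2 * u x ^ 2 =
      (∫ x : ℝ, v x ^ 2) + c₀ ^ 2 * ∫ x : ℝ, PP x ^ 2 := by
    have hg1 : Integrable (fun x => 2 * c₀ * (v x * PP x)) := hvPi.const_mul (2 * c₀)
    have hf1 : Integrable (fun x => v x ^ 2 - 2 * c₀ * (v x * PP x)) := h2.sub hg1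
    have hg2 : Integrable (fun x => c₀ ^ 2 * PP x ^ 2) := hPP2i.const_mul (c₀ ^ 2)
    rw [heq2, integral_add hf1 hg2, integral_sub h2 hg1, integral_const_mul,
      integral_const_mul, horth]
    ring
  have hPP2nn : 0 ≤ ∫ x : ℝ, PP x ^ 2 := integral_nonneg (fun x => sq_nonneg _)
  have hO2 : ∫ x : ℝ, v x ^ 2 ≤ ∫ x : ℝ, PP x ^ 2 * u x ^ 2 := by
    rw [hO1]
    nlinarith [sq_nonneg c₀]
  have hO3 : ∫ x : ℝ, PP x ^ 2 * u x ^ 2 ≤ 16 * ∫ x : ℝ, mw x * u x ^ 2 := by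
    have := integral_mono huPP2 (hum.const_mul 16) (fun x => by
      have := mul_le_mul_of_nonneg_right (PP_sq_le_mw x) (sq_nonneg (u x))
      calc PP x ^ 2 * u x ^ 2 ≤ 16 * mw x * u x ^ 2 := this
        _ = 16 * (mw x * u x ^ 2) := by ring)
    rwa [integral_const_mul] at this
  have hO5 : ∫ x : ℝ, mw x * u' x ^ 2 ≤ ∫ x : ℝ, hh x ^ 2 :=
    integral_mono hu'm hh2i (fun x => hmwu' x)
  linarith

theorem spectral_gap_orthogonality_condition :
    ∃ lam₀ > (0:ℝ), ∀ v : ℝ → ℝ,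
      ContDiff ℝ 1 v →
      Integrable (fun x => (v x) ^ 2) →
      Integrable (fun x => (deriv v x) ^ 2) →
      (∫ s : ℝ, v s * deriv U s) = 0 →
      (∫ s : ℝ, (-(deriv v s) ^ 2 - (3 * (U s) ^ 2 - 1) * (v s) ^ 2)) ≤
        -lam₀ * ∫ s : ℝ, (v s) ^ 2 := by
  refine ⟨1/8, by norm_num, ?_⟩
  intro v hv h2 h2' horth
  have horthP : (∫ x : ℝ, v x * PP x) = 0 := by
    have he : (fun s : ℝ => v s * deriv U s) = fun s : ℝ => (v s * PP s) / Real.sqrt 2 := by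
      funext s
      rw [deriv_U]
      ring
    rw [he, integral_div] at horth
    exact (div_eq_zero_iff.mp horth).resolve_right (ne_of_gt s2_pos)
  have hq := quad_eq v hv h2 h2'
  have hp := poincare v hv h2 h2' horthP
  rw [hq]
  linarith
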